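/- For r ≥ 1, the r-th factorial moment of the geometric distribution of order k equals μ_(r) = (r!/(q p^k)^{r+1}) · { q p^k - Σ_{m=2}^{r+1} (-1)^m p^{mk} q^{m-1} C((r+1-m)k + r - 1, m-2) - Σ_{m=2}^{r} (-1)^m p^{mk} q^m C((r+1-m)k + r - 1, m-1) }. -/

import Mathlib

open Finset

attribute [local instance] Classical.propDecidable

/-- `hasRunEnd k n ω m` : in the outcome string `ω` of `n` Bernoulli trials, a run of
`k` consecutive successes ends at trial `m` (trials `m-k+1, ..., m` are successes). -/
def hasRunEnd (k n : ℕ) (ω : Fin n → Bool) (m : ℕ) : Prop :=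
  k ≤ m ∧ m ≤ n ∧ ∀ j : Fin n, m - k ≤ (j : ℕ) → (j : ℕ) < m → ω j = true

/-- The first run of `k` consecutive successes is completed exactly at trial `n`. -/
def firstRun (k n : ℕ) (ω : Fin n → Bool) : Prop :=
  hasRunEnd k n ω n ∧ ∀ m < n, ¬ hasRunEnd k n ω m

/-- The pmf of the geometric distribution of order `k`:
`fk k p n = P(N_k = n)` where `N_k` is the waiting time for the first run of `k`
consecutive successes in i.i.d. Bernoulli(`p`) trials; each outcome string contributes
`p^{#successes} (1-p)^{#failures}`. -/
noncomputable def fk (k : ℕ) (p : ℝ) (n : ℕ) : ℝ :=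
  ∑ ω ∈ Finset.univ.filter (fun ω : Fin n → Bool => firstRun k n ω),
    p ^ (Finset.univ.filter (fun i => ω i = true)).card *
      (1 - p) ^ (Finset.univ.filter (fun i => ω i = false)).card

namespace GOK

noncomputable def w {n : ℕ} (p : ℝ) (ω : Fin n → Bool) : ℝ :=
  ∏ i, (if ω i then p else 1 - p)

def noRun (k n : ℕ) (ω : Fin n → Bool) : Prop := ∀ m, ¬ hasRunEnd k n ω m

noncomputable def g (k : ℕ) (p : ℝ) (n : ℕ) : ℝ :=
  ∑ ω ∈ Finset.univ.filter (fun ω : Fin n → Bool => noRun k n ω), w p ω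

lemma w_eq {n : ℕ} (p : ℝ) (ω : Fin n → Bool) :
    p ^ (Finset.univ.filter (fun i => ω i = true)).card *
      (1 - p) ^ (Finset.univ.filter (fun i => ω i = false)).card = w p ω := by
  rw [w, ← Finset.prod_filter_mul_prod_filter_not univ (fun i => ω i = true)]
  congr 1
  · rw [Finset.prod_congr rfl (fun i hi => ?_), Finset.prod_const]
    simp only [mem_filter] at hi
    simp [hi.2]
  · rw [show (Finset.univ.filter (fun i => ω i = false))
        = Finset.univ.filter (fun i => ¬ ω i = true) from Finset.filter_congr (fun i _ => by simp)]
    rw [Finset.prod_congr rfl (g := fun _ => 1 - p) (fun i hi => ?_), Finset.prod_const]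
    simp only [mem_filter] at hi
    simp [hi.2]

lemma fk_eq (k : ℕ) (p : ℝ) (n : ℕ) :
    fk k p n = ∑ ω ∈ Finset.univ.filter (fun ω : Fin n → Bool => firstRun k n ω), w p ω := by
  rw [fk]
  exact Finset.sum_congr rfl fun ω _ => w_eq p ω

lemma w_nonneg {n : ℕ} {p : ℝ} (hp0 : 0 ≤ p) (hp1 : p ≤ 1) (ω : Fin n → Bool) : 0 ≤ w p ω :=
  Finset.prod_nonneg fun i _ => by by_cases h : ω i <;> simp [h, hp0] <;> linarith

lemma w_append {a b : ℕ} (p : ℝ) (σ : Fin a → Bool) (τ : Fin b → Bool) :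
    w p (Fin.append σ τ) = w p σ * w p τ := by
  rw [w, Fin.prod_univ_add]
  congr 1
  · exact Finset.prod_congr rfl fun i _ => by rw [Fin.append_left]
  · exact Finset.prod_congr rfl fun i _ => by rw [Fin.append_right]

lemma sum_w_split {a b : ℕ} (p : ℝ) (P : (Fin a → Bool) → Prop) (Q : (Fin b → Bool) → Prop) :
    ∑ ω ∈ Finset.univ.filter (fun ω : Fin (a + b) → Bool =>
        P (fun i => ω (Fin.castAdd b i)) ∧ Q (fun i => ω (Fin.natAdd a i))), w p ω
      = (∑ σ ∈ Finset.univ.filter P, w p σ) * (∑ τ ∈ Finset.univ.filter Q, w p τ) := by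
  rw [Finset.sum_filter, Finset.sum_filter, Finset.sum_filter,
    ← Equiv.sum_comp (Fin.appendEquiv (α := Bool) a b), Fintype.sum_prod_type,
    Finset.sum_mul_sum]
  apply Finset.sum_congr rfl
  intro σ _
  apply Finset.sum_congr rfl
  intro τ _
  have h1 : (fun i => (Fin.appendEquiv a b) (σ, τ) (Fin.castAdd b i)) = σ := by
    funext i; simp [Fin.appendEquiv, Fin.append_left]
  have h2 : (fun i => (Fin.appendEquiv a b) (σ, τ) (Fin.natAdd a i)) = τ := by
    funext i; simp [Fin.appendEquiv, Fin.append_right]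
  have h3 : w p ((Fin.appendEquiv a b) (σ, τ)) = w p σ * w p τ := by
    simp only [Fin.appendEquiv, Equiv.coe_fn_mk]
    exact w_append p σ τ
  rw [h1, h2, h3]
  by_cases hP : P σ <;> by_cases hQ : Q τ <;> simp [hP, hQ]

lemma sum_w_one (p : ℝ) : ∑ τ : Fin 1 → Bool, w p τ = 1 := by
  rw [← Equiv.sum_comp (Equiv.funUnique (Fin 1) Bool).symm]
  rw [Fintype.sum_bool]
  simp [w, Equiv.funUnique]

lemma sum_w_univ (p : ℝ) (n : ℕ) : ∑ ω : Fin n → Bool, w p ω = 1 := by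
  induction n with
  | zero =>
    rw [Fintype.sum_eq_single (fun i => true)]
    · simp [w]
    · intro x hx; exact absurd (funext fun i => i.elim0) hx
  | succ n ih =>
    have := sum_w_split (a := n) (b := 1) p (fun _ => True) (fun _ => True)
    simp only [and_self, Finset.filter_true] at this
    rw [this, ih, sum_w_one, one_mul]

lemma hasRunEnd_transfer {k a b m : ℕ} (hm : m ≤ a) (ω : Fin (a + b) → Bool) :
    hasRunEnd k (a + b) ω m ↔ hasRunEnd k a (fun i => ω (Fin.castAdd b i)) m := by
  constructor
  · rintro ⟨h1, h2, h3⟩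
    refine ⟨h1, hm, fun j hj1 hj2 => ?_⟩
    exact h3 (Fin.castAdd b j) hj1 hj2
  · rintro ⟨h1, h2, h3⟩
    refine ⟨h1, le_trans hm (Nat.le_add_right a b), fun j hj1 hj2 => ?_⟩
    have hja : (j : ℕ) < a := lt_of_lt_of_le hj2 hm
    have := h3 ⟨(j : ℕ), hja⟩ hj1 hj2
    simp only at this
    have hco : Fin.castAdd b (⟨(j : ℕ), hja⟩ : Fin a) = j := by
      apply Fin.ext; simp
    rwa [hco] at this

lemma noRun_le {k n : ℕ} (hn : n < k) (ω : Fin n → Bool) : noRun k n ω := by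
  intro m hm
  exact absurd (le_trans hm.1 hm.2.1) (Nat.not_le.mpr hn)

lemma g_of_lt {k : ℕ} (p : ℝ) {n : ℕ} (hn : n < k) : g k p n = 1 := by
  rw [g, Finset.filter_true_of_mem (fun ω _ => noRun_le hn ω), sum_w_univ]

lemma fk_of_lt (k : ℕ) (p : ℝ) {n : ℕ} (hn : n < k) : fk k p n = 0 := by
  rw [fk_eq]
  apply Finset.sum_eq_zero
  intro ω hω
  simp only [Finset.mem_filter] at hω
  exact absurd (le_trans hω.2.1.1 hω.2.1.2.1) (Nat.not_le.mpr hn)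

lemma fk_self (k : ℕ) (hk : 1 ≤ k) (p : ℝ) : fk k p k = p ^ k := by
  rw [fk_eq]
  have hset : Finset.univ.filter (fun ω : Fin k → Bool => firstRun k k ω)
      = {fun _ => true} := by
    ext ω
    simp only [Finset.mem_filter, Finset.mem_univ, true_and, Finset.mem_singleton]
    constructor
    · rintro ⟨⟨_, _, h3⟩, _⟩
      funext j
      exact h3 j (by omega) j.isLt
    · rintro rfl
      exact ⟨⟨le_refl k, le_refl k, fun j _ _ => rfl⟩, fun m hm hr => absurd hr.1 (by omega)⟩
  rw [hset, Finset.sum_singleton, w]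
  simp

lemma prefix_noRun_iff {k n : ℕ} (ω : Fin (n + 1) → Bool) :
    noRun k n (fun i => ω (Fin.castAdd 1 i)) ↔ (noRun k (n+1) ω ∨ firstRun k (n+1) ω) := by
  have key : noRun k n (fun i => ω (Fin.castAdd 1 i)) ↔ ∀ m ≤ n, ¬ hasRunEnd k (n+1) ω m := by
    constructor
    · intro h m hm hr
      exact h m ((hasRunEnd_transfer hm ω).mp hr)
    · intro h m hr
      exact h m hr.2.1 ((hasRunEnd_transfer hr.2.1 ω).mpr hr)
  rw [key]
  constructor
  · intro h
    by_cases hN : hasRunEnd k (n+1) ω (n+1)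
    · exact Or.inr ⟨hN, fun m hm => h m (by omega)⟩
    · refine Or.inl (fun m hr => ?_)
      by_cases hm : m ≤ n
      · exact h m hm hr
      · have hm' : m = n + 1 := by have := hr.2.1; omega
        rw [hm'] at hr
        exact hN hr
  · rintro (h | h) m hm hr
    · exact h m hr
    · exact h.2 m (by omega) hr

lemma sum_filter_irrel {α : Type*} [Fintype α] (p : α → Prop) (h1 h2 : DecidablePred p)
    (f : α → ℝ) :
    ∑ x ∈ @Finset.filter α p h1 Finset.univ, f x
      = ∑ x ∈ @Finset.filter α p h2 Finset.univ, f x := by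
  cases Subsingleton.elim h1 h2
  rfl

lemma g_succ (k : ℕ) (p : ℝ) (n : ℕ) : g k p n = g k p (n+1) + fk k p (n+1) := by
  have hsplit := sum_w_split (a := n) (b := 1) p (noRun k n) (fun _ => True)
  have hE : Finset.univ.filter (fun ω : Fin (n+1) → Bool =>
        noRun k n (fun i => ω (Fin.castAdd 1 i)) ∧ True)
      = (Finset.univ.filter (fun ω : Fin (n+1) → Bool => noRun k (n+1) ω))
        ∪ (Finset.univ.filter (fun ω : Fin (n+1) → Bool => firstRun k (n+1) ω)) := by
    rw [← Finset.filter_or]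
    apply Finset.filter_congr
    intro ω _
    rw [and_true]
    exact prefix_noRun_iff ω
  have hdisj : Disjoint
      (Finset.univ.filter (fun ω : Fin (n+1) → Bool => noRun k (n+1) ω))
      (Finset.univ.filter (fun ω : Fin (n+1) → Bool => firstRun k (n+1) ω)) := by
    rw [Finset.disjoint_filter]
    intro ω _ h1 h2
    exact h1 (n+1) h2.1
  rw [Finset.filter_true, sum_w_one, mul_one] at hsplit
  have hgn : g k p n = ∑ ω ∈ (Finset.univ.filter (fun ω : Fin (n+1) → Bool => noRun k (n+1) ω))
        ∪ (Finset.univ.filter (fun ω : Fin (n+1) → Bool => firstRun k (n+1) ω)), w p ω := by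
    rw [← hE]
    exact hsplit.symm.trans (sum_filter_irrel _ _ _ _)
  rw [hgn, Finset.sum_union hdisj, ← fk_eq]
  rfl

def cfx (k : ℕ) : Fin (k+1) → Bool := fun i => if i = 0 then false else true

lemma w_cfx (k : ℕ) (p : ℝ) : w p (cfx k) = (1 - p) * p ^ k := by
  rw [w, Fin.prod_univ_succ]
  simp [cfx, Fin.succ_ne_zero]

lemma firstRun_iff_shift {k : ℕ} (hk : 1 ≤ k) (n : ℕ) (ω : Fin (n + (k+1)) → Bool) :
    firstRun k (n + (k+1)) ω ↔
      (noRun k n (fun i => ω (Fin.castAdd (k+1) i)) ∧ (fun i => ω (Fin.natAdd n i)) = cfx k) := by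
  constructor
  · rintro ⟨⟨hk1, hk2, hrun⟩, hmin⟩
    have hfalse : ω ⟨n, by omega⟩ = false := by
      by_contra htrue
      rw [Bool.not_eq_false] at htrue
      apply hmin (n+k) (by omega)
      refine ⟨by omega, by omega, fun j hj1 hj2 => ?_⟩
      by_cases hjn : (j : ℕ) = n
      · have hj : j = ⟨n, by omega⟩ := Fin.ext hjn
        rw [hj]; exact htrue
      · exact hrun j (by omega) (by omega)
    refine ⟨?_, ?_⟩
    · intro m hr
      have hm := hr.2.1
      exact hmin m (by omega) ((hasRunEnd_transfer hm ω).mpr hr)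
    · funext i
      by_cases hi : i = (0 : Fin (k+1))
      · subst hi
        have he : Fin.natAdd n (0 : Fin (k+1)) = (⟨n, by omega⟩ : Fin (n + (k+1))) := by
          apply Fin.ext; simp
        simp [he, hfalse, cfx]
      · have hi' : (i : ℕ) ≠ 0 := fun h => hi (Fin.ext h)
        have hv : (Fin.natAdd n i : ℕ) = n + (i : ℕ) := rfl
        have := hrun (Fin.natAdd n i) (by omega) (by simp only [hv]; omega)
        simp only [this, cfx, if_neg hi]
  · rintro ⟨hnr, hsuf⟩
    have hval : ∀ i : Fin (k+1), ω (Fin.natAdd n i) = cfx k i := fun i => congrFun hsuf i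
    refine ⟨⟨by omega, le_refl _, fun j hj1 hj2 => ?_⟩, ?_⟩
    · have hj1' : n + 1 ≤ (j : ℕ) := by omega
      have hjlt : (j : ℕ) - n < k + 1 := by omega
      have he : Fin.natAdd n (⟨(j : ℕ) - n, hjlt⟩ : Fin (k+1)) = j := by
        apply Fin.ext
        simp only [Fin.coe_natAdd]
        omega
      have hne : (⟨(j : ℕ) - n, hjlt⟩ : Fin (k+1)) ≠ 0 := by
        intro h
        have : (j : ℕ) - n = 0 := congrArg Fin.val h
        omega
      rw [← he, hval]
      simp only [cfx, if_neg hne]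
    · intro m hmN hr
      obtain ⟨hm1, hm2, hrun'⟩ := hr
      by_cases hmn : m ≤ n
      · exact hnr m ((hasRunEnd_transfer hmn ω).mp ⟨hm1, hm2, hrun'⟩)
      · have h1 : ω ⟨n, by omega⟩ = true := hrun' ⟨n, by omega⟩ (by simp; omega) (by simp; omega)
        have h2 : ω ⟨n, by omega⟩ = false := by
          have h0 := hval 0
          have he : Fin.natAdd n (0 : Fin (k+1)) = (⟨n, by omega⟩ : Fin (n + (k+1))) := by
            apply Fin.ext; simp
          rw [he] at h0
          rw [h0]
          simp [cfx]
        rw [h1] at h2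
        simp at h2

lemma fk_shift (k : ℕ) (hk : 1 ≤ k) (p : ℝ) (n : ℕ) :
    fk k p (n + (k+1)) = g k p n * ((1 - p) * p ^ k) := by
  have hsing : ∀ h : DecidablePred (fun τ : Fin (k+1) → Bool => τ = cfx k),
      (∑ τ ∈ @Finset.filter _ (fun τ : Fin (k+1) → Bool => τ = cfx k) h Finset.univ, w p τ)
      = (1 - p) * p ^ k := by
    intro h
    rw [show @Finset.filter _ (fun τ : Fin (k+1) → Bool => τ = cfx k) h Finset.univ = {cfx k} by
      ext τ; simp [Finset.mem_filter], Finset.sum_singleton, w_cfx]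
  have hs := sum_w_split (a := n) (b := k+1) p (noRun k n) (fun τ => τ = cfx k)
  rw [hsing _] at hs
  rw [fk_eq, Finset.filter_congr (fun ω _ => (firstRun_iff_shift hk n ω))]
  exact (sum_filter_irrel _ _ _ _).trans hs

section bounds

variable {k : ℕ} {p : ℝ}

lemma fk_nonneg (hp0 : 0 ≤ p) (hp1 : p ≤ 1) (k n : ℕ) : 0 ≤ fk k p n := by
  rw [fk_eq]
  exact Finset.sum_nonneg fun ω _ => w_nonneg hp0 hp1 ω

lemma g_nonneg (hp0 : 0 ≤ p) (hp1 : p ≤ 1) (k n : ℕ) : 0 ≤ g k p n :=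
  Finset.sum_nonneg fun ω _ => w_nonneg hp0 hp1 ω

lemma g_mono (hp0 : 0 ≤ p) (hp1 : p ≤ 1) (k : ℕ) : Antitone (g k p) := by
  apply antitone_nat_of_succ_le
  intro n
  rw [g_succ k p n]
  linarith [fk_nonneg hp0 hp1 k (n+1)]

lemma g_decay (hp0 : 0 ≤ p) (hp1 : p ≤ 1) (hk : 1 ≤ k) (m : ℕ) :
    g k p (k + m) ≤ (1 - (1 - p) * p ^ k) ^ m := by
  have hc0 : 0 ≤ (1 - p) * p ^ k := mul_nonneg (by linarith) (pow_nonneg hp0 k)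
  have hc1 : (1 - p) * p ^ k ≤ 1 := by
    have h1 : p ^ k ≤ 1 := pow_le_one₀ hp0 hp1
    nlinarith
  induction m with
  | zero =>
    calc g k p (k + 0) ≤ g k p 0 := g_mono hp0 hp1 k (Nat.zero_le _)
    _ = 1 := g_of_lt p (by omega)
    _ = (1 - (1 - p) * p ^ k) ^ 0 := by norm_num
  | succ m ih =>
    have heq : g k p (k + m) = g k p (k + m + 1) + fk k p (k + m + 1) := g_succ k p (k + m)
    have hidx : k + m + 1 = m + (k + 1) := by omega
    have hfk : fk k p (k + m + 1) = g k p m * ((1 - p) * p ^ k) := by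
      rw [hidx]; exact fk_shift k hk p m
    have hgm : g k p (k + m) ≤ g k p m := g_mono hp0 hp1 k (by omega)
    have : g k p (k + m + 1) = g k p (k + m) - g k p m * ((1 - p) * p ^ k) := by
      rw [heq, hfk]; ring
    rw [show k + (m+1) = k + m + 1 by omega, this]
    calc g k p (k + m) - g k p m * ((1 - p) * p ^ k)
        ≤ g k p (k + m) - g k p (k + m) * ((1 - p) * p ^ k) := by nlinarith
      _ = (1 - (1 - p) * p ^ k) * g k p (k + m) := by ring
      _ ≤ (1 - (1 - p) * p ^ k) * (1 - (1 - p) * p ^ k) ^ m := by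
          apply mul_le_mul_of_nonneg_left ih (by linarith)
      _ = (1 - (1 - p) * p ^ k) ^ (m + 1) := by ring

end bounds
/-! ### Nat descFactorial algebra -/

lemma desc_succ_left (m s : ℕ) :
    (m + 1).descFactorial s = m.descFactorial s + s * m.descFactorial (s - 1) := by
  cases s with
  | zero => simp
  | succ t =>
    rw [Nat.succ_descFactorial_succ, Nat.descFactorial_succ, Nat.succ_sub_one]
    rcases le_or_gt t m with h | h
    · have hm : m + 1 = (m - t) + (t + 1) := by omega
      rw [hm, add_mul]
    · rw [Nat.descFactorial_eq_zero_iff_lt.mpr h]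
      simp

lemma desc_vandermonde (a b s : ℕ) :
    (a + b).descFactorial s
      = ∑ i ∈ Finset.range (s + 1), s.choose i * a.descFactorial i * b.descFactorial (s - i) := by
  rw [Nat.descFactorial_eq_factorial_mul_choose, Nat.add_choose_eq,
    Finset.Nat.sum_antidiagonal_eq_sum_range_succ_mk, Finset.mul_sum]
  apply Finset.sum_congr rfl
  intro i hi
  rw [Finset.mem_range] at hi
  have hi' : i ≤ s := by omega
  rw [Nat.descFactorial_eq_factorial_mul_choose, Nat.descFactorial_eq_factorial_mul_choose]
  have : s.factorial = s.choose i * i.factorial * (s - i).factorial :=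
    (Nat.choose_mul_factorial_mul_factorial hi').symm
  rw [this]
  ring

lemma sum_desc_range (t : ℕ) : ∀ K : ℕ,
    ∑ m ∈ Finset.range K, (t + 1) * m.descFactorial t = K.descFactorial (t + 1) := by
  intro K
  induction K with
  | zero => simp
  | succ K ih =>
    rw [Finset.sum_range_succ, ih, desc_succ_left K (t+1)]
    simp [Nat.add_comm]

/-! ### decay bounds and summability -/

section analysis

variable {k : ℕ} {p : ℝ}

lemma g_self (hk : 1 ≤ k) (p : ℝ) : g k p k = 1 - p ^ k := by
  have h := g_succ k p (k - 1)
  rw [g_of_lt p (by omega : k - 1 < k)] at h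
  rw [show k - 1 + 1 = k by omega] at h
  rw [fk_self k hk p] at h
  linarith

variable (hk : 1 ≤ k) (hp0 : 0 < p) (hp1 : p < 1)
include hk hp0 hp1

lemma c_pos : 0 < (1 - p) * p ^ k := by
  have := pow_pos hp0 k
  nlinarith

lemma c_lt_one : (1 - p) * p ^ k < 1 := by
  have h1 : p ^ k ≤ 1 := pow_le_one₀ (le_of_lt hp0) (le_of_lt hp1)
  have h2 : 0 < p ^ k := pow_pos hp0 k
  nlinarith

lemma g_le_rho (n : ℕ) :
    g k p n ≤ (1 - (1 - p) * p ^ k) ^ n / (1 - (1 - p) * p ^ k) ^ k := by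
  set c := (1 - p) * p ^ k with hc
  have hc0 : 0 < c := c_pos hk hp0 hp1
  have hc1 : c < 1 := c_lt_one hk hp0 hp1
  have hr0 : 0 < 1 - c := by linarith
  have hr1 : 1 - c ≤ 1 := by linarith
  have hrk : 0 < (1 - c) ^ k := pow_pos hr0 k
  rcases lt_or_ge n k with h | h
  · rw [g_of_lt p h, le_div_iff₀ hrk, one_mul]
    exact pow_le_pow_of_le_one (le_of_lt hr0) hr1 (le_of_lt h)
  · obtain ⟨m, rfl⟩ := Nat.exists_eq_add_of_le h
    have := g_decay (le_of_lt hp0) (le_of_lt hp1) hk m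
    calc g k p (k + m) ≤ (1 - c) ^ m := this
      _ = (1 - c) ^ (k + m) / (1 - c) ^ k := by
          rw [pow_add]
          field_simp
      _ = _ := rfl

lemma summable_desc_g (j : ℕ) :
    Summable (fun n => ((n.descFactorial j : ℝ)) * g k p n) := by
  set c := (1 - p) * p ^ k with hc
  have hc0 : 0 < c := c_pos hk hp0 hp1
  have hc1 : c < 1 := c_lt_one hk hp0 hp1
  have hr0 : 0 < 1 - c := by linarith
  have hrlt : ‖(1 - c : ℝ)‖ < 1 := by
    rw [Real.norm_eq_abs, abs_of_pos hr0]
    linarith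
  have hsum : Summable (fun n : ℕ => ((1 - c) ^ k)⁻¹ * ((n : ℝ) ^ j * (1 - c) ^ n)) :=
    (summable_pow_mul_geometric_of_norm_lt_one j hrlt).mul_left _
  apply Summable.of_nonneg_of_le _ _ hsum
  · intro n
    exact mul_nonneg (Nat.cast_nonneg _) (g_nonneg (le_of_lt hp0) (le_of_lt hp1) k n)
  · intro n
    have h1 : (n.descFactorial j : ℝ) ≤ (n : ℝ) ^ j := by
      calc (n.descFactorial j : ℝ) ≤ ((n ^ j : ℕ) : ℝ) := by
            exact_mod_cast Nat.cast_le.mpr (Nat.descFactorial_le_pow n j)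
        _ = (n : ℝ) ^ j := by push_cast; ring
    have h2 : g k p n ≤ (1 - c) ^ n / (1 - c) ^ k := g_le_rho hk hp0 hp1 n
    have h3 : 0 ≤ g k p n := g_nonneg (le_of_lt hp0) (le_of_lt hp1) k n
    have h4 : (0:ℝ) ≤ (n:ℝ) ^ j := by positivity
    calc (n.descFactorial j : ℝ) * g k p n ≤ (n : ℝ) ^ j * ((1 - c) ^ n / (1 - c) ^ k) := by
          apply mul_le_mul h1 h2 h3 h4
      _ = ((1 - c) ^ k)⁻¹ * ((n : ℝ) ^ j * (1 - c) ^ n) := by ring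

lemma summable_desc_g_shift (j t : ℕ) :
    Summable (fun n => ((n.descFactorial j : ℝ)) * g k p (n + t)) := by
  apply Summable.of_nonneg_of_le _ _ (summable_desc_g hk hp0 hp1 j)
  · intro n
    exact mul_nonneg (Nat.cast_nonneg _) (g_nonneg (le_of_lt hp0) (le_of_lt hp1) k _)
  · intro n
    apply mul_le_mul_of_nonneg_left _ (Nat.cast_nonneg _)
    exact g_mono (le_of_lt hp0) (le_of_lt hp1) k (Nat.le_add_right n t |>.trans (by omega))

end analysis

/-- the `s`-th "factorial moment" of the survival sequence `g`. -/
noncomputable def Bm (k : ℕ) (p : ℝ) (s : ℕ) : ℝ :=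
  ∑' n, ((n.descFactorial s : ℝ)) * g k p n
lemma Brec {k : ℕ} {p : ℝ} (hk : 1 ≤ k) (hp0 : 0 < p) (hp1 : p < 1) (s : ℕ) :
    ((1 - p) * p ^ k) * ∑ i ∈ Finset.range (s + 1),
        (s.choose i : ℝ) * ((k + 1).descFactorial (s - i) : ℝ) * Bm k p i
      = (k.descFactorial s : ℝ) * (1 - p ^ k)
          - (s : ℝ) * ∑ m ∈ Finset.range k, (m.descFactorial (s - 1) : ℝ)
          + (s : ℝ) * Bm k p (s - 1) := by
  have hq0 : (0:ℝ) ≤ p := le_of_lt hp0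
  have hq1 : p ≤ 1 := le_of_lt hp1
  set c : ℝ := (1 - p) * p ^ k with hc
  set d : ℕ → ℝ := fun n => (n.descFactorial s : ℝ) * g k p n with hdd
  set F : ℕ → ℝ := fun m => ((m + 1).descFactorial s : ℝ) * g k p m with hFF
  have hd : Summable d := summable_desc_g hk hp0 hp1 s
  have hFeq : ∀ m, F m = d m + (s : ℝ) * ((m.descFactorial (s - 1) : ℝ) * g k p m) := by
    intro m
    simp only [hFF, hdd, desc_succ_left m s]
    push_cast
    ring
  have hds1 : Summable (fun m => (m.descFactorial (s - 1) : ℝ) * g k p m) :=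
    summable_desc_g hk hp0 hp1 (s - 1)
  have hF : Summable F := by
    apply Summable.congr (f := fun m => d m + (s : ℝ) * ((m.descFactorial (s - 1) : ℝ) * g k p m))
    · exact hd.add (hds1.mul_left _)
    · intro m; exact (hFeq m).symm
  have h2 : ∀ n, g k p (n + k + 1) = g k p (n + k) - g k p n * c := by
    intro n
    have hgs := g_succ k p (n + k)
    have hfs := fk_shift k hk p n
    rw [show n + (k + 1) = n + k + 1 from rfl] at hfs
    rw [hfs] at hgs
    rw [← hc] at hgs
    linarith
  -- the three tsum pieces
  have hA : Summable (fun n => F (n + k)) := (summable_nat_add_iff k).mpr hF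
  have hvan : ∀ n : ℕ, ((n + (k + 1)).descFactorial s : ℝ)
      = ∑ i ∈ Finset.range (s + 1),
          (s.choose i : ℝ) * (n.descFactorial i : ℝ) * ((k + 1).descFactorial (s - i) : ℝ) := by
    intro n
    have := desc_vandermonde n (k + 1) s
    exact_mod_cast congrArg (Nat.cast : ℕ → ℝ) this
  have hBpt : ∀ n : ℕ, ((n + (k + 1)).descFactorial s : ℝ) * g k p n * c
      = ∑ i ∈ Finset.range (s + 1),
          ((s.choose i : ℝ) * ((k + 1).descFactorial (s - i) : ℝ) * c)
            * ((n.descFactorial i : ℝ) * g k p n) := by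
    intro n
    rw [hvan n, Finset.sum_mul, Finset.sum_mul]
    apply Finset.sum_congr rfl
    intro i _
    ring
  have hB : Summable (fun n => ((n + (k + 1)).descFactorial s : ℝ) * g k p n * c) := by
    apply Summable.congr (f := fun n => ∑ i ∈ Finset.range (s + 1),
      ((s.choose i : ℝ) * ((k + 1).descFactorial (s - i) : ℝ) * c)
        * ((n.descFactorial i : ℝ) * g k p n))
    · exact summable_sum fun i _ => (summable_desc_g hk hp0 hp1 i).mul_left _
    · intro n; exact (hBpt n).symm
  have hdpt : ∀ n, d (n + (k + 1))
      = F (n + k) - ((n + (k + 1)).descFactorial s : ℝ) * g k p n * c := by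
    intro n
    simp only [hdd, hFF]
    rw [show n + (k + 1) = n + k + 1 from rfl, h2 n]
    ring
  have hTd : ∑' n, d (n + (k + 1))
      = (∑' n, F (n + k)) - ∑' n, ((n + (k + 1)).descFactorial s : ℝ) * g k p n * c := by
    rw [← hA.tsum_sub hB]
    exact tsum_congr hdpt
  -- evaluate ∑' F and its shift
  have hFsum : ∑' m, F m = Bm k p s + (s : ℝ) * Bm k p (s - 1) := by
    rw [tsum_congr hFeq, hd.tsum_add (hds1.mul_left _), tsum_mul_left]
    rfl
  have hFshift : ∑ m ∈ Finset.range k, F m + ∑' n, F (n + k) = ∑' m, F m :=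
    hF.sum_add_tsum_nat_add k
  -- evaluate ∑' B
  have hBsum : ∑' n, ((n + (k + 1)).descFactorial s : ℝ) * g k p n * c
      = ∑ i ∈ Finset.range (s + 1),
          ((s.choose i : ℝ) * ((k + 1).descFactorial (s - i) : ℝ) * c) * Bm k p i := by
    rw [tsum_congr hBpt, Summable.tsum_finsetSum (fun i _ => (summable_desc_g hk hp0 hp1 i).mul_left _)]
    exact Finset.sum_congr rfl fun i _ => tsum_mul_left
  have hsplit : ∑ i ∈ Finset.range (k + 1), d i + ∑' n, d (n + (k + 1)) = Bm k p s :=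
    hd.sum_add_tsum_nat_add (k + 1)
  -- boundary sums
  have hgone : ∀ m ∈ Finset.range k, g k p m = 1 := by
    intro m hm
    exact g_of_lt p (Finset.mem_range.mp hm)
  have hbd1 : ∑ i ∈ Finset.range (k + 1), d i
      = ∑ m ∈ Finset.range k, (m.descFactorial s : ℝ)
        + (k.descFactorial s : ℝ) * (1 - p ^ k) := by
    rw [Finset.sum_range_succ]
    congr 1
    · apply Finset.sum_congr rfl
      intro m hm
      simp only [hdd, hgone m hm, mul_one]
    · simp only [hdd, g_self hk p]
  have hbd2 : ∑ m ∈ Finset.range k, F m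
      = ∑ m ∈ Finset.range k, (m.descFactorial s : ℝ)
        + (s : ℝ) * ∑ m ∈ Finset.range k, (m.descFactorial (s - 1) : ℝ) := by
    rw [Finset.mul_sum, ← Finset.sum_add_distrib]
    apply Finset.sum_congr rfl
    intro m hm
    rw [hFeq m, hgone m hm]
    simp only [hdd, hgone m hm, mul_one]
  -- assemble
  have h5 : ∑' n, F (n + k) = ∑' m, F m - ∑ m ∈ Finset.range k, F m := by linarith
  have hfin : ∑ i ∈ Finset.range (s + 1),
      ((s.choose i : ℝ) * ((k + 1).descFactorial (s - i) : ℝ) * c) * Bm k p i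
      = c * ∑ i ∈ Finset.range (s + 1),
          (s.choose i : ℝ) * ((k + 1).descFactorial (s - i) : ℝ) * Bm k p i := by
    rw [Finset.mul_sum]
    exact Finset.sum_congr rfl fun i _ => by ring
  rw [hfin] at hBsum
  linarith [hsplit, hbd1, hTd, h5, hFsum, hbd2, hBsum]
/-! ### Binomial identities over ℤ -/

lemma alt_sum_choose (a : ℕ) : ∀ s : ℕ,
    ∑ j ∈ Finset.range (s + 1), (-1 : ℤ) ^ j * ((a + 1).choose j : ℤ) = (-1) ^ s * (a.choose s : ℤ) := by
  intro s
  induction s with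
  | zero => simp
  | succ s ih =>
    rw [Finset.sum_range_succ, ih, Nat.choose_succ_succ a s]
    push_cast
    ring

lemma alt_vandermonde : ∀ (a N m : ℕ), a ≤ N → m ≤ N →
    ∑ j ∈ Finset.range (m + 1),
        (-1 : ℤ) ^ j * (a.choose j : ℤ) * (((N - j).choose (m - j) : ℕ) : ℤ)
      = ((N - a).choose m : ℤ) := by
  intro a
  induction a with
  | zero =>
    intro N m _ _
    rw [Finset.sum_eq_single 0]
    · simp
    · intro j _ hj
      rw [Nat.choose_eq_zero_of_lt (by omega : 0 < j)]
      simp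
    · intro h
      simp at h
  | succ a ih =>
    intro N m haN hmN
    cases m with
    | zero => simp
    | succ m =>
      -- peel off j = 0
      rw [Finset.sum_range_succ']
      simp only [pow_zero, one_mul, Nat.choose_zero_right, Nat.cast_one, Nat.sub_zero]
      -- rewrite each term using Pascal on (a+1).choose (j+1)
      have hterm : ∀ j, (-1 : ℤ) ^ (j + 1) * ((a + 1).choose (j + 1) : ℤ)
            * (((N - (j + 1)).choose (m + 1 - (j + 1)) : ℕ) : ℤ)
          = -((-1 : ℤ) ^ j * (a.choose j : ℤ) * (((N - 1 - j).choose (m - j) : ℕ) : ℤ))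
            + (-1 : ℤ) ^ (j + 1) * (a.choose (j + 1) : ℤ)
              * (((N - (j + 1)).choose (m + 1 - (j + 1)) : ℕ) : ℤ) := by
        intro j
        rw [Nat.choose_succ_succ a j]
        have h1 : N - (j + 1) = N - 1 - j := by omega
        have h2 : m + 1 - (j + 1) = m - j := by omega
        rw [h1, h2]
        push_cast
        ring
      rw [Finset.sum_congr rfl (fun j _ => hterm j), Finset.sum_add_distrib]
      have hS1 : ∑ j ∈ Finset.range (m + 1),
          -((-1 : ℤ) ^ j * (a.choose j : ℤ) * (((N - 1 - j).choose (m - j) : ℕ) : ℤ))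
          = -(((N - 1 - a).choose m : ℕ) : ℤ) := by
        rw [Finset.sum_neg_distrib]
        congr 1
        exact ih (N - 1) m (by omega) (by omega)
      have hS2 : ∑ j ∈ Finset.range (m + 1),
            (-1 : ℤ) ^ (j + 1) * (a.choose (j + 1) : ℤ)
              * (((N - (j + 1)).choose (m + 1 - (j + 1)) : ℕ) : ℤ)
          = (((N - a).choose (m + 1) : ℕ) : ℤ) - ((N.choose (m + 1) : ℕ) : ℤ) := by
        have := ih N (m + 1) (by omega) (by omega)
        rw [Finset.sum_range_succ'] at this
        simp only [pow_zero, one_mul, Nat.choose_zero_right, Nat.cast_one, Nat.sub_zero] at this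
        linarith [this]
      rw [hS1, hS2]
      have hpascal : ((N - (a + 1)).choose (m + 1) : ℤ) + ((N - 1 - a).choose m : ℤ)
          = ((N - a).choose (m + 1) : ℤ) := by
        have h3 : N - a = (N - (a + 1)) + 1 := by omega
        have h4 : N - 1 - a = N - (a + 1) := by omega
        rw [h3, h4]
        rw [Nat.choose_succ_succ (N - (a + 1)) m]
        push_cast
        ring
      linarith [hpascal]
/-! ### closed-form pieces -/

noncomputable def Am (k : ℕ) (p : ℝ) (r : ℕ) : ℝ :=
  ∑ i ∈ Finset.range r, (-1 : ℝ) ^ i * p ^ ((i + 2) * k) * (1 - p) ^ (i + 1)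
      * (((r - 1 - i) * k + (r - 1)).choose i : ℝ)

noncomputable def Bq (k : ℕ) (p : ℝ) (r : ℕ) : ℝ :=
  ∑ i ∈ Finset.range (r - 1), (-1 : ℝ) ^ i * p ^ ((i + 2) * k) * (1 - p) ^ (i + 2)
      * (((r - 1 - i) * k + (r - 1)).choose (i + 1) : ℝ)

noncomputable def Em (k : ℕ) (p : ℝ) (r : ℕ) : ℝ := (1 - p) * p ^ k - Am k p r - Bq k p r

lemma cpow (p : ℝ) (k j : ℕ) : ((1 - p) * p ^ k) ^ j = (1 - p) ^ j * p ^ (j * k) := by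
  rw [mul_pow, ← pow_mul, mul_comm k j]

lemma neg_one_pow_sub (u j : ℕ) (h : j ≤ u) : ((-1 : ℝ)) ^ (u - j) = (-1) ^ u * (-1) ^ j := by
  have h1 : ((-1 : ℝ)) ^ u = (-1) ^ (u - j) * (-1) ^ j := by
    rw [← pow_add]
    congr 1
    omega
  have h2 : ((-1 : ℝ)) ^ j * (-1) ^ j = 1 := by
    rw [← pow_add, show j + j = 2 * j from by ring, pow_mul]
    norm_num
  calc ((-1 : ℝ)) ^ (u - j) = (-1) ^ (u - j) * ((-1) ^ j * (-1) ^ j) := by rw [h2, mul_one]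
    _ = (-1) ^ u * (-1) ^ j := by rw [h1]; ring

lemma neg_one_sq_pow (u : ℕ) : ((-1 : ℝ)) ^ u * (-1) ^ u = 1 := by
  rw [← pow_add, show u + u = 2 * u from by ring, pow_mul]
  norm_num

lemma double_reindex {L M : ℕ} (hML : M ≤ L) (f : ℕ → ℕ → ℝ) :
    ∑ j ∈ Finset.range L, ∑ u ∈ Finset.Ico j M, f j u
      = ∑ u ∈ Finset.range M, ∑ j ∈ Finset.range (u + 1), f j u := by
  apply Finset.sum_comm'
  intro j u
  simp only [Finset.mem_range, Finset.mem_Ico]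
  omega

lemma inner_A_eval {k s u : ℕ} (hu : u < s) :
    ∑ j ∈ Finset.range (u + 1), (-1 : ℝ) ^ j * (((k + 1).choose j : ℕ) : ℝ)
        * ((((s - u) * k + s - j).choose (u - j) : ℕ) : ℝ)
      = ((((s - 1 - u) * k + (s - 1)).choose u : ℕ) : ℝ) := by
  have h1 : 1 ≤ s - u := by omega
  have hksu : k + 1 ≤ (s - u) * k + s := by
    have : k ≤ (s - u) * k := le_mul_of_one_le_left (Nat.zero_le k) h1
    omega
  have hus : u ≤ (s - u) * k + s := by
    have := Nat.zero_le ((s - u) * k)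
    omega
  have hZ := alt_vandermonde (k + 1) ((s - u) * k + s) u hksu hus
  have hN : (s - u) * k + s - (k + 1) = (s - 1 - u) * k + (s - 1) := by
    have h2 : s - u = (s - 1 - u) + 1 := by omega
    rw [h2, add_mul, one_mul]
    generalize (s - 1 - u) * k = a
    omega
  rw [hN] at hZ
  exact_mod_cast hZ

lemma inner_A_edge {k s : ℕ} :
    ∑ j ∈ Finset.range (s + 1), (-1 : ℝ) ^ j * (((k + 1).choose j : ℕ) : ℝ)
        * ((((s - s) * k + s - j).choose (s - j) : ℕ) : ℝ)
      = (-1 : ℝ) ^ s * ((k.choose s : ℕ) : ℝ) := by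
  have hpt : ∀ j ∈ Finset.range (s + 1),
      (-1 : ℝ) ^ j * (((k + 1).choose j : ℕ) : ℝ)
          * ((((s - s) * k + s - j).choose (s - j) : ℕ) : ℝ)
        = (-1 : ℝ) ^ j * (((k + 1).choose j : ℕ) : ℝ) := by
    intro j _
    simp only [Nat.sub_self, zero_mul, zero_add, Nat.choose_self, Nat.cast_one, mul_one]
  rw [Finset.sum_congr rfl hpt]
  exact_mod_cast alt_sum_choose k s

lemma inner_B_eval {k s u : ℕ} (hu : u < s) :
    ∑ j ∈ Finset.range (u + 1), (-1 : ℝ) ^ j * (((k + 1).choose j : ℕ) : ℝ)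
        * ((((s - u) * k + s - j).choose (u + 1 - j) : ℕ) : ℝ)
      = ((((s - 1 - u) * k + (s - 1)).choose (u + 1) : ℕ) : ℝ)
        + (-1 : ℝ) ^ u * (((k + 1).choose (u + 1) : ℕ) : ℝ) := by
  have h1 : 1 ≤ s - u := by omega
  have hksu : k + 1 ≤ (s - u) * k + s := by
    have : k ≤ (s - u) * k := le_mul_of_one_le_left (Nat.zero_le k) h1
    omega
  have hus : u + 1 ≤ (s - u) * k + s := by
    have := Nat.zero_le ((s - u) * k)
    omega
  have hZ := alt_vandermonde (k + 1) ((s - u) * k + s) (u + 1) hksu hus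
  rw [Finset.sum_range_succ] at hZ
  have hN : (s - u) * k + s - (k + 1) = (s - 1 - u) * k + (s - 1) := by
    have h2 : s - u = (s - 1 - u) + 1 := by omega
    rw [h2, add_mul, one_mul]
    generalize (s - 1 - u) * k = a
    omega
  rw [hN] at hZ
  have hlast : (-1 : ℤ) ^ (u + 1) * (((k + 1).choose (u + 1) : ℕ) : ℤ)
      * ((((s - u) * k + s - (u + 1)).choose (u + 1 - (u + 1)) : ℕ) : ℤ)
      = (-1 : ℤ) ^ (u + 1) * (((k + 1).choose (u + 1) : ℕ) : ℤ) := by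
    rw [Nat.sub_self, Nat.choose_zero_right, Nat.cast_one, mul_one]
  rw [hlast] at hZ
  have hZ' : ∑ j ∈ Finset.range (u + 1),
      (-1 : ℤ) ^ j * (((k + 1).choose j : ℕ) : ℤ)
        * ((((s - u) * k + s - j).choose (u + 1 - j) : ℕ) : ℤ)
      = ((((s - 1 - u) * k + (s - 1)).choose (u + 1) : ℕ) : ℤ)
        + (-1 : ℤ) ^ u * (((k + 1).choose (u + 1) : ℕ) : ℤ) := by
    have hsign : (-1 : ℤ) ^ (u + 1) = -(-1 : ℤ) ^ u := by rw [pow_succ]; ring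
    rw [hsign] at hZ
    linarith [hZ]
  exact_mod_cast hZ'
lemma master {k : ℕ} (p : ℝ) {s : ℕ} (hs : 1 ≤ s) :
    ∑ j ∈ Finset.range (s + 1),
        (((k + 1).choose j : ℕ) : ℝ) * ((1 - p) * p ^ k) ^ j * Em k p (s + 1 - j)
      = Em k p s - ((k.choose s : ℕ) : ℝ) * ((1 - p) * p ^ k) ^ (s + 1) * p ^ k := by
  set c : ℝ := (1 - p) * p ^ k with hc
  -- split the sum into three parts
  have hsplit : ∀ j ∈ Finset.range (s + 1),
      (((k + 1).choose j : ℕ) : ℝ) * c ^ j * Em k p (s + 1 - j)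
        = (((k + 1).choose j : ℕ) : ℝ) * c ^ j * c
          - ((((k + 1).choose j : ℕ) : ℝ) * c ^ j * Am k p (s + 1 - j)
              + (((k + 1).choose j : ℕ) : ℝ) * c ^ j * Bq k p (s + 1 - j)) := by
    intro j _
    rw [Em, ← hc]
    ring
  rw [Finset.sum_congr rfl hsplit, Finset.sum_sub_distrib, Finset.sum_add_distrib]
  -- Part 1 : the pure `c` part
  have hP1 : ∑ j ∈ Finset.range (s + 1), (((k + 1).choose j : ℕ) : ℝ) * c ^ j * c
      = c + ∑ u ∈ Finset.range s,
          (((k + 1).choose (u + 1) : ℕ) : ℝ) * ((1 - p) ^ (u + 2) * p ^ ((u + 2) * k)) := by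
    rw [Finset.sum_range_succ']
    simp only [Nat.choose_zero_right, Nat.cast_one, pow_zero, one_mul]
    rw [add_comm]
    congr 1
    apply Finset.sum_congr rfl
    intro u _
    have hpw : c ^ (u + 1) * c = (1 - p) ^ (u + 2) * p ^ ((u + 2) * k) := by
      rw [← pow_succ, hc, cpow]
    rw [mul_assoc, hpw]
  -- Part A
  have hPA : ∑ j ∈ Finset.range (s + 1),
        (((k + 1).choose j : ℕ) : ℝ) * c ^ j * Am k p (s + 1 - j)
      = Am k p s + ((k.choose s : ℕ) : ℝ) * (p ^ ((s + 2) * k) * (1 - p) ^ (s + 1)) := by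
    have h1 : ∀ j ∈ Finset.range (s + 1),
        (((k + 1).choose j : ℕ) : ℝ) * c ^ j * Am k p (s + 1 - j)
          = ∑ u ∈ Finset.Ico j (s + 1),
              (-1 : ℝ) ^ (u - j) * p ^ ((u + 2) * k) * (1 - p) ^ (u + 1)
                * (((k + 1).choose j : ℕ) : ℝ)
                * ((((s - u) * k + s - j).choose (u - j) : ℕ) : ℝ) := by
      intro j hj
      rw [Finset.mem_range] at hj
      have hj' : j ≤ s := by omega
      rw [Am, Finset.mul_sum]
      rw [show Finset.Ico j (s + 1) = Finset.Ico j (j + (s + 1 - j)) from by congr 1; omega]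
      rw [Finset.sum_Ico_eq_sum_range]
      rw [show j + (s + 1 - j) - j = s + 1 - j from by omega]
      apply Finset.sum_congr rfl
      intro i hi
      rw [Finset.mem_range] at hi
      have e0 : j + i - j = i := by omega
      have e1 : s + 1 - j - 1 - i = s - (j + i) := by omega
      have e2 : s + 1 - j - 1 = s - j := by omega
      rw [e0, e1, e2]
      have e3 : ∀ a : ℕ, a + (s - j) = a + s - j := fun a => by omega
      rw [e3]
      have e4 : (j + i + 2) * k = j * k + (i + 2) * k := by ring
      have e5 : (1 - p : ℝ) ^ (j + i + 1) = (1 - p) ^ j * (1 - p) ^ (i + 1) := by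
        rw [← pow_add, show j + (i + 1) = j + i + 1 from by omega]
      rw [e4, pow_add, e5, hc, cpow]
      ring
    rw [Finset.sum_congr rfl h1]
    rw [double_reindex (le_refl (s + 1))]
    have h2 : ∀ u ∈ Finset.range (s + 1),
        (∑ j ∈ Finset.range (u + 1),
            (-1 : ℝ) ^ (u - j) * p ^ ((u + 2) * k) * (1 - p) ^ (u + 1)
              * (((k + 1).choose j : ℕ) : ℝ)
              * ((((s - u) * k + s - j).choose (u - j) : ℕ) : ℝ))
          = (-1 : ℝ) ^ u * (p ^ ((u + 2) * k) * (1 - p) ^ (u + 1))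
              * ∑ j ∈ Finset.range (u + 1),
                  (-1 : ℝ) ^ j * (((k + 1).choose j : ℕ) : ℝ)
                    * ((((s - u) * k + s - j).choose (u - j) : ℕ) : ℝ) := by
      intro u _
      rw [Finset.mul_sum]
      apply Finset.sum_congr rfl
      intro j hj
      rw [Finset.mem_range] at hj
      rw [neg_one_pow_sub u j (by omega)]
      ring
    rw [Finset.sum_congr rfl h2]
    rw [Finset.sum_range_succ]
    have h3 : ∀ u ∈ Finset.range s,
        (-1 : ℝ) ^ u * (p ^ ((u + 2) * k) * (1 - p) ^ (u + 1))
            * ∑ j ∈ Finset.range (u + 1),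
                (-1 : ℝ) ^ j * (((k + 1).choose j : ℕ) : ℝ)
                  * ((((s - u) * k + s - j).choose (u - j) : ℕ) : ℝ)
          = (-1 : ℝ) ^ u * p ^ ((u + 2) * k) * (1 - p) ^ (u + 1)
              * ((((s - 1 - u) * k + (s - 1)).choose u : ℕ) : ℝ) := by
      intro u hu
      rw [Finset.mem_range] at hu
      rw [inner_A_eval hu]
      ring
    rw [Finset.sum_congr rfl h3]
    rw [inner_A_edge]
    rw [Am]
    congr 1
    rw [show (-1 : ℝ) ^ s * (p ^ ((s + 2) * k) * (1 - p) ^ (s + 1))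
          * ((-1 : ℝ) ^ s * ((k.choose s : ℕ) : ℝ))
        = ((-1 : ℝ) ^ s * (-1 : ℝ) ^ s) * (((k.choose s : ℕ) : ℝ)
            * (p ^ ((s + 2) * k) * (1 - p) ^ (s + 1))) from by ring]
    rw [neg_one_sq_pow, one_mul]
  -- Part B
  have hPB : ∑ j ∈ Finset.range (s + 1),
        (((k + 1).choose j : ℕ) : ℝ) * c ^ j * Bq k p (s + 1 - j)
      = Bq k p s + ∑ u ∈ Finset.range s,
          (((k + 1).choose (u + 1) : ℕ) : ℝ) * ((1 - p) ^ (u + 2) * p ^ ((u + 2) * k)) := by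
    have h1 : ∀ j ∈ Finset.range (s + 1),
        (((k + 1).choose j : ℕ) : ℝ) * c ^ j * Bq k p (s + 1 - j)
          = ∑ u ∈ Finset.Ico j s,
              (-1 : ℝ) ^ (u - j) * p ^ ((u + 2) * k) * (1 - p) ^ (u + 2)
                * (((k + 1).choose j : ℕ) : ℝ)
                * ((((s - u) * k + s - j).choose (u + 1 - j) : ℕ) : ℝ) := by
      intro j hj
      rw [Finset.mem_range] at hj
      have hj' : j ≤ s := by omega
      rw [Bq, Finset.mul_sum]
      rw [show Finset.Ico j s = Finset.Ico j (j + (s + 1 - j - 1)) from by congr 1; omega]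
      rw [Finset.sum_Ico_eq_sum_range]
      rw [show j + (s + 1 - j - 1) - j = s + 1 - j - 1 from by omega]
      apply Finset.sum_congr rfl
      intro i hi
      rw [Finset.mem_range] at hi
      have e0 : j + i - j = i := by omega
      have e0' : j + i + 1 - j = i + 1 := by omega
      have e1 : s + 1 - j - 1 - i = s - (j + i) := by omega
      have e2 : s + 1 - j - 1 = s - j := by omega
      rw [e0, e0', e1, e2]
      have e3 : ∀ a : ℕ, a + (s - j) = a + s - j := fun a => by omega
      rw [e3]
      have e4 : (j + i + 2) * k = j * k + (i + 2) * k := by ring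
      have e5 : (1 - p : ℝ) ^ (j + i + 2) = (1 - p) ^ j * (1 - p) ^ (i + 2) := by
        rw [← pow_add, show j + (i + 2) = j + i + 2 from by omega]
      rw [e4, pow_add, e5, hc, cpow]
      ring
    rw [Finset.sum_congr rfl h1]
    rw [double_reindex (by omega : s ≤ s + 1)]
    have h2 : ∀ u ∈ Finset.range s,
        (∑ j ∈ Finset.range (u + 1),
            (-1 : ℝ) ^ (u - j) * p ^ ((u + 2) * k) * (1 - p) ^ (u + 2)
              * (((k + 1).choose j : ℕ) : ℝ)
              * ((((s - u) * k + s - j).choose (u + 1 - j) : ℕ) : ℝ))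
          = (-1 : ℝ) ^ u * p ^ ((u + 2) * k) * (1 - p) ^ (u + 2)
              * ((((s - 1 - u) * k + (s - 1)).choose (u + 1) : ℕ) : ℝ)
            + (((k + 1).choose (u + 1) : ℕ) : ℝ) * ((1 - p) ^ (u + 2) * p ^ ((u + 2) * k)) := by
      intro u hu
      rw [Finset.mem_range] at hu
      have hstep : ∀ j ∈ Finset.range (u + 1),
          (-1 : ℝ) ^ (u - j) * p ^ ((u + 2) * k) * (1 - p) ^ (u + 2)
              * (((k + 1).choose j : ℕ) : ℝ)
              * ((((s - u) * k + s - j).choose (u + 1 - j) : ℕ) : ℝ)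
            = (-1 : ℝ) ^ u * (p ^ ((u + 2) * k) * (1 - p) ^ (u + 2))
                * ((-1 : ℝ) ^ j * (((k + 1).choose j : ℕ) : ℝ)
                    * ((((s - u) * k + s - j).choose (u + 1 - j) : ℕ) : ℝ)) := by
        intro j hj
        rw [Finset.mem_range] at hj
        rw [neg_one_pow_sub u j (by omega)]
        ring
      rw [Finset.sum_congr rfl hstep, ← Finset.mul_sum, inner_B_eval hu]
      rw [mul_add]
      congr 1
      · ring
      · rw [show (-1 : ℝ) ^ u * (p ^ ((u + 2) * k) * (1 - p) ^ (u + 2))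
              * ((-1 : ℝ) ^ u * (((k + 1).choose (u + 1) : ℕ) : ℝ))
            = ((-1 : ℝ) ^ u * (-1 : ℝ) ^ u) * ((((k + 1).choose (u + 1) : ℕ) : ℝ)
                * ((1 - p) ^ (u + 2) * p ^ ((u + 2) * k))) from by ring]
        rw [neg_one_sq_pow, one_mul]
    rw [Finset.sum_congr rfl h2, Finset.sum_add_distrib]
    congr 1
    -- the main B sum equals Bq k p s  (the top term u = s-1 vanishes)
    rw [Bq]
    rw [show s = (s - 1) + 1 from by omega]
    rw [Finset.sum_range_succ]
    rw [show (s - 1) + 1 = s from by omega]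
    have hzero : (((s - 1 - (s - 1)) * k + (s - 1)).choose s : ℕ) = 0 := by
      apply Nat.choose_eq_zero_of_lt
      simp only [Nat.sub_self, zero_mul, zero_add]
      omega
    rw [hzero]
    simp
  rw [hP1, hPA, hPB, Em, ← hc]
  have hcc : ((k.choose s : ℕ) : ℝ) * c ^ (s + 1) * p ^ k
      = ((k.choose s : ℕ) : ℝ) * (p ^ ((s + 2) * k) * (1 - p) ^ (s + 1)) := by
    rw [hc, cpow]
    rw [show ((s + 2) * k) = (s + 1) * k + k from by ring, pow_add]
    ring
  rw [hcc]
  ring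
lemma Bm_closed {k : ℕ} {p : ℝ} (hk : 1 ≤ k) (hp0 : 0 < p) (hp1 : p < 1) :
    ∀ s : ℕ, ((1 - p) * p ^ k) ^ (s + 2) * Bm k p s
      = (s.factorial : ℝ) * Em k p (s + 1) := by
  intro s
  induction s using Nat.strong_induction_on with
  | _ s IH =>
    rcases Nat.eq_zero_or_pos s with hs0 | hs
    · subst hs0
      have h0 := Brec hk hp0 hp1 0
      rw [Finset.sum_range_one] at h0
      simp at h0
      -- h0 : (1-p)*p^k * Bm k p 0 = 1 - p^k   (roughly)
      have hAm1 : Am k p 1 = (1 - p) * p ^ (2 * k) := by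
        rw [Am]
        simp only [Finset.sum_range_one, pow_zero, one_mul, Nat.sub_self, zero_mul,
          zero_add, Nat.choose_self, Nat.cast_one, mul_one]
        rw [show (0 + 2) * k = 2 * k from by ring]
        ring
      have hBq1 : Bq k p 1 = 0 := by
        rw [Bq]
        simp
      rw [Em, hAm1, hBq1]
      rw [show (2 : ℕ) * k = k + k from by ring, pow_add]
      norm_num
      linear_combination ((1 - p) * p ^ k) * h0
    · have hs1 : 1 ≤ s := hs
      have hrec := Brec hk hp0 hp1 s
      rw [Finset.sum_range_succ] at hrec
      simp only [Nat.choose_self, Nat.sub_self, Nat.descFactorial_zero, Nat.cast_one,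
        one_mul, mul_one] at hrec
      -- boundary sum identity
      have hnat4 := sum_desc_range (s - 1) k
      rw [show s - 1 + 1 = s from by omega] at hnat4
      have e4 : (s : ℝ) * ∑ m ∈ Finset.range k, (m.descFactorial (s - 1) : ℝ)
          = (k.descFactorial s : ℝ) := by
        have hc4 := congrArg (Nat.cast : ℕ → ℝ) hnat4
        push_cast at hc4
        rw [Finset.mul_sum]
        exact hc4
      have e5 : (k.descFactorial s : ℝ) = (s.factorial : ℝ) * (k.choose s : ℝ) := by
        exact_mod_cast Nat.descFactorial_eq_factorial_mul_choose k s
      -- previous moment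
      have hIHm := IH (s - 1) (by omega)
      rw [show s - 1 + 2 = s + 1 from by omega, show s - 1 + 1 = s from by omega] at hIHm
      have hfact : (s : ℝ) * ((s - 1).factorial : ℝ) = (s.factorial : ℝ) := by
        exact_mod_cast Nat.mul_factorial_pred (by omega : s ≠ 0)
      have e3 : ((1 - p) * p ^ k) ^ (s + 1) * ((s : ℝ) * Bm k p (s - 1))
          = (s.factorial : ℝ) * Em k p s := by
        linear_combination (s : ℝ) * hIHm + Em k p s * hfact
      -- the lower moments, re-expressed via the IH
      have e1 : ((1 - p) * p ^ k) ^ (s + 2) * ∑ i ∈ Finset.range s,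
            (s.choose i : ℝ) * ((k + 1).descFactorial (s - i) : ℝ) * Bm k p i
          = (s.factorial : ℝ) * ∑ i ∈ Finset.range s,
              (((k + 1).choose (s - i) : ℕ) : ℝ) * ((1 - p) * p ^ k) ^ (s - i)
                * Em k p (i + 1) := by
        rw [Finset.mul_sum, Finset.mul_sum]
        apply Finset.sum_congr rfl
        intro i hi
        rw [Finset.mem_range] at hi
        have hIHi := IH i hi
        have hcsplit : ((1 - p) * p ^ k) ^ (s + 2)
            = ((1 - p) * p ^ k) ^ (s - i) * ((1 - p) * p ^ k) ^ (i + 2) := by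
          rw [← pow_add]
          congr 1
          omega
        rw [hcsplit]
        have hre : ((1 - p) * p ^ k) ^ (s - i) * ((1 - p) * p ^ k) ^ (i + 2)
              * ((s.choose i : ℝ) * ((k + 1).descFactorial (s - i) : ℝ) * Bm k p i)
            = (s.choose i : ℝ) * ((k + 1).descFactorial (s - i) : ℝ)
                * ((1 - p) * p ^ k) ^ (s - i)
                * (((1 - p) * p ^ k) ^ (i + 2) * Bm k p i) := by ring
        rw [hre, hIHi]
        have hnat : s.choose i * ((k + 1).descFactorial (s - i)) * i.factorial
            = s.factorial * ((k + 1).choose (s - i)) := by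
          rw [Nat.descFactorial_eq_factorial_mul_choose]
          have hcf := Nat.choose_mul_factorial_mul_factorial (le_of_lt hi)
          calc s.choose i * ((s - i).factorial * (k + 1).choose (s - i)) * i.factorial
              = s.choose i * i.factorial * (s - i).factorial * (k + 1).choose (s - i) := by
                ring
            _ = s.factorial * (k + 1).choose (s - i) := by rw [hcf]
        have hnatR : (s.choose i : ℝ) * ((k + 1).descFactorial (s - i) : ℝ)
            * (i.factorial : ℝ) = (s.factorial : ℝ) * (((k + 1).choose (s - i) : ℕ) : ℝ) := by
          exact_mod_cast congrArg (Nat.cast : ℕ → ℝ) hnat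
        linear_combination (((1 - p) * p ^ k) ^ (s - i) * Em k p (i + 1)) * hnatR
      -- reflection
      have hrefl := Finset.sum_range_reflect
        (fun j => (((k + 1).choose (j + 1) : ℕ) : ℝ) * ((1 - p) * p ^ k) ^ (j + 1)
          * Em k p (s + 1 - (j + 1))) s
      have hreflL : ∑ i ∈ Finset.range s,
            (((k + 1).choose (s - 1 - i + 1) : ℕ) : ℝ) * ((1 - p) * p ^ k) ^ (s - 1 - i + 1)
              * Em k p (s + 1 - (s - 1 - i + 1))
          = ∑ i ∈ Finset.range s,
              (((k + 1).choose (s - i) : ℕ) : ℝ) * ((1 - p) * p ^ k) ^ (s - i)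
                * Em k p (i + 1) := by
        apply Finset.sum_congr rfl
        intro i hi
        rw [Finset.mem_range] at hi
        rw [show s - 1 - i + 1 = s - i from by omega, show s + 1 - (s - i) = i + 1 from by omega]
      have hS := Finset.sum_range_succ'
        (fun j => (((k + 1).choose j : ℕ) : ℝ) * ((1 - p) * p ^ k) ^ j * Em k p (s + 1 - j)) s
      -- hS : ∑_{range (s+1)} = ∑_{range s} (shifted) + (j = 0 term)
      have hS0 : (((k + 1).choose 0 : ℕ) : ℝ) * ((1 - p) * p ^ k) ^ 0 * Em k p (s + 1 - 0)
          = Em k p (s + 1) := by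
        simp
      have e2 := master (k := k) p hs1
      -- combine reflection pieces :
      have e1' : ((1 - p) * p ^ k) ^ (s + 2) * ∑ i ∈ Finset.range s,
            (s.choose i : ℝ) * ((k + 1).descFactorial (s - i) : ℝ) * Bm k p i
          = (s.factorial : ℝ)
              * ((∑ j ∈ Finset.range (s + 1),
                    (((k + 1).choose j : ℕ) : ℝ) * ((1 - p) * p ^ k) ^ j
                      * Em k p (s + 1 - j))
                  - Em k p (s + 1)) := by
        rw [e1, ← hreflL, hrefl]
        rw [hS, hS0]
        ring
      linear_combination (((1 - p) * p ^ k) ^ (s + 1)) * hrec - e1' + e3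
        - (s.factorial : ℝ) * e2 - ((1 - p) * p ^ k) ^ (s + 1) * e4
        - ((1 - p) * p ^ k) ^ (s + 1) * p ^ k * e5
set_option maxHeartbeats 1000000 in
lemma tsum_fk {k : ℕ} {p : ℝ} (hk : 1 ≤ k) (hp0 : 0 < p) (hp1 : p < 1) {r : ℕ} (hr : 1 ≤ r) :
    ∑' n, (n.descFactorial r : ℝ) * fk k p n = (r : ℝ) * Bm k p (r - 1) := by
  have hq0 : (0:ℝ) ≤ p := le_of_lt hp0
  have hq1 : p ≤ 1 := le_of_lt hp1
  have h00 : (0 : ℕ).descFactorial r = 0 := by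
    rw [show r = (r - 1) + 1 from by omega]
    exact Nat.zero_descFactorial_succ _
  have hfk : ∀ n, fk k p (n + 1) = g k p n - g k p (n + 1) := by
    intro n
    have := g_succ k p n
    linarith
  have hd : Summable (fun n => (n.descFactorial r : ℝ) * g k p n) :=
    summable_desc_g hk hp0 hp1 r
  have hd1 : Summable (fun n => (n.descFactorial (r - 1) : ℝ) * g k p n) :=
    summable_desc_g hk hp0 hp1 (r - 1)
  have hdshift : Summable (fun n => ((n + 1).descFactorial r : ℝ) * g k p (n + 1)) :=
    (summable_nat_add_iff (f := fun n => (n.descFactorial r : ℝ) * g k p n) 1).mpr hd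
  have hcast : ∀ n : ℕ, ((n + 1).descFactorial r : ℝ)
      = (n.descFactorial r : ℝ) + (r : ℝ) * (n.descFactorial (r - 1) : ℝ) := by
    intro n
    exact_mod_cast congrArg (Nat.cast : ℕ → ℝ) (desc_succ_left n r)
  have hψeq : ∀ n, ((n + 1).descFactorial r : ℝ) * fk k p (n + 1)
      = (r : ℝ) * ((n.descFactorial (r - 1) : ℝ) * g k p n)
        + ((n.descFactorial r : ℝ) * g k p n
            - ((n + 1).descFactorial r : ℝ) * g k p (n + 1)) := by
    intro n
    rw [hfk n, mul_sub, hcast n]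
    ring
  have hψ : Summable (fun n => ((n + 1).descFactorial r : ℝ) * fk k p (n + 1)) := by
    apply Summable.congr (f := fun n => (r : ℝ) * ((n.descFactorial (r - 1) : ℝ) * g k p n)
        + ((n.descFactorial r : ℝ) * g k p n - ((n + 1).descFactorial r : ℝ) * g k p (n + 1)))
    · exact (hd1.mul_left _).add (hd.sub hdshift)
    · intro n
      exact (hψeq n).symm
  have hφ : Summable (fun n => (n.descFactorial r : ℝ) * fk k p n) := by
    rw [← summable_nat_add_iff (f := fun n => (n.descFactorial r : ℝ) * fk k p n) 1]
    exact hψ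
  rw [hφ.tsum_eq_zero_add]
  rw [h00]
  simp only [Nat.cast_zero, zero_mul, zero_add]
  rw [tsum_congr hψeq]
  rw [(hd1.mul_left _).tsum_add (hd.sub hdshift), tsum_mul_left,
    hd.tsum_sub hdshift]
  have hshift2 : ∑' n, ((n + 1).descFactorial r : ℝ) * g k p (n + 1)
      = (∑' n, (n.descFactorial r : ℝ) * g k p n) - (0 : ℕ).descFactorial r * g k p 0 := by
    have := hd.tsum_eq_zero_add
    rw [this]
    ring
  rw [hshift2, h00]
  simp only [Nat.cast_zero, zero_mul, sub_zero]
  rw [Bm]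
  ring

lemma Am_eq (k : ℕ) (p : ℝ) (r : ℕ) (hr : 1 ≤ r) :
    Am k p r = ∑ m ∈ Finset.Icc 2 (r + 1),
      (-1 : ℝ) ^ m * p ^ (m * k) * (1 - p) ^ (m - 1)
        * (((r + 1 - m) * k + r - 1).choose (m - 2) : ℝ) := by
  rw [show Finset.Icc 2 (r + 1) = Finset.Ico 2 (r + 2) from by rw [← Finset.Ico_add_one_right_eq_Icc]; rfl]
  rw [Finset.sum_Ico_eq_sum_range]
  rw [show r + 2 - 2 = r from by omega]
  rw [Am]
  apply Finset.sum_congr rfl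
  intro i _
  have e1 : ((-1 : ℝ)) ^ (2 + i) = (-1) ^ i := by
    rw [pow_add]
    norm_num
  have e2 : (2 + i) * k = (i + 2) * k := by ring
  have e3 : 2 + i - 1 = i + 1 := by omega
  have e4 : r + 1 - (2 + i) = r - 1 - i := by omega
  have e5 : 2 + i - 2 = i := by omega
  have e6 : ∀ a : ℕ, a + r - 1 = a + (r - 1) := fun a => by omega
  rw [e1, e2, e3, e4, e5, e6]

lemma Bq_eq (k : ℕ) (p : ℝ) (r : ℕ) (hr : 1 ≤ r) :
    Bq k p r = ∑ m ∈ Finset.Icc 2 r,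
      (-1 : ℝ) ^ m * p ^ (m * k) * (1 - p) ^ m
        * (((r + 1 - m) * k + r - 1).choose (m - 1) : ℝ) := by
  rw [show Finset.Icc 2 r = Finset.Ico 2 (r + 1) from by rw [← Finset.Ico_add_one_right_eq_Icc]]
  rw [Finset.sum_Ico_eq_sum_range]
  rw [show r + 1 - 2 = r - 1 from by omega]
  rw [Bq]
  apply Finset.sum_congr rfl
  intro i _
  have e1 : ((-1 : ℝ)) ^ (2 + i) = (-1) ^ i := by
    rw [pow_add]
    norm_num
  have e2 : (2 + i) * k = (i + 2) * k := by ring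
  have e3 : r + 1 - (2 + i) = r - 1 - i := by omega
  have e5 : 2 + i - 1 = i + 1 := by omega
  have e6 : ∀ a : ℕ, a + r - 1 = a + (r - 1) := fun a => by omega
  have e7 : (1 - p : ℝ) ^ (2 + i) = (1 - p) ^ (i + 2) := by
    rw [show 2 + i = i + 2 from by omega]
  rw [e1, e2, e3, e5, e6, e7]
end GOK

/-- Explicit combinatorial formula for the `r`-th factorial moment. -/
theorem factorial_moment_formula (k : ℕ) (hk : 1 ≤ k) (p q : ℝ) (hp0 : 0 < p) (hp1 : p < 1)
    (hq : q = 1 - p) (r : ℕ) (hr : 1 ≤ r) :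
    ∑' n : ℕ, (n.descFactorial r : ℝ) * fk k p n
      = (r.factorial : ℝ) / (q * p ^ k) ^ (r + 1) *
          (q * p ^ k
            - ∑ m ∈ Finset.Icc 2 (r + 1),
                (-1 : ℝ) ^ m * p ^ (m * k) * q ^ (m - 1) *
                  (((r + 1 - m) * k + r - 1).choose (m - 2))
            - ∑ m ∈ Finset.Icc 2 r,
                (-1 : ℝ) ^ m * p ^ (m * k) * q ^ m *
                  (((r + 1 - m) * k + r - 1).choose (m - 1))) := by
  subst hq
  have hc0 : ((1 - p) * p ^ k) ≠ 0 := ne_of_gt (GOK.c_pos hk hp0 hp1)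
  have hcp : ((1 - p) * p ^ k) ^ (r + 1) ≠ 0 := pow_ne_zero _ hc0
  rw [GOK.tsum_fk hk hp0 hp1 hr]
  have h2 := GOK.Bm_closed hk hp0 hp1 (r - 1)
  rw [show r - 1 + 2 = r + 1 from by omega, show r - 1 + 1 = r from by omega] at h2
  rw [GOK.Em, GOK.Am_eq k p r hr, GOK.Bq_eq k p r hr] at h2
  have hfact : (r : ℝ) * ((r - 1).factorial : ℝ) = (r.factorial : ℝ) := by
    exact_mod_cast Nat.mul_factorial_pred (by omega : r ≠ 0)
  rw [div_mul_eq_mul_div, eq_div_iff hcp, ← hfact]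
  linear_combination (r : ℝ) * h2
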